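/- Let a, b be positive real numbers and ν ∈ (0,1). Then for every nonnegative integer n, (1−ν)a + νb ≥ a^{1−ν}b^{ν} + Σ_{k=0}^{n} r_k [ (a^{1−m_k/2^k} b^{m_k/2^k})^{1/2} − (a^{1−(m_k+1)/2^k} b^{(m_k+1)/2^k})^{1/2} ]². -/

import Mathlib

/-- `r ν k`: the recursively defined coefficients, `r 0 = min {ν, 1-ν}`,
`r k = min {2 r (k-1), 1 - 2 r (k-1)}`. -/
noncomputable def r (ν : ℝ) : ℕ → ℝ
  | 0 => min ν (1 - ν)
  | k + 1 => min (2 * r ν k) (1 - 2 * r ν k)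

/-- `m ν k = ⌊2^k ν⌋`, as a real number. -/
noncomputable def m (ν : ℝ) (k : ℕ) : ℝ := ⌊2 ^ k * ν⌋

/-- The `k`-th correction term. -/
noncomputable def term (a b ν : ℝ) (k : ℕ) : ℝ :=
  r ν k *
    ((a ^ (1 - m ν k / 2 ^ k) * b ^ (m ν k / 2 ^ k)) ^ ((1 : ℝ) / 2) -
      (a ^ (1 - (m ν k + 1) / 2 ^ k) * b ^ ((m ν k + 1) / 2 ^ k)) ^ ((1 : ℝ) / 2)) ^ 2

lemma r_succ (ν : ℝ) (k : ℕ) : r ν (k + 1) = min (2 * r ν k) (1 - 2 * r ν k) := rfl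

lemma r_shift {ν ν' : ℝ} (h : min ν' (1 - ν') = r ν 1) : ∀ k, r ν' k = r ν (k + 1) := by
  intro k
  induction k with
  | zero => exact h
  | succ k ih => rw [r_succ, r_succ, ih]

lemma pow_comb₁ {a b : ℝ} (ha : 0 < a) (hb : 0 < b) (t : ℝ) :
    a ^ (1 - t) * (a ^ ((1 : ℝ) / 2) * b ^ ((1 : ℝ) / 2)) ^ t
      = a ^ (1 - t / 2) * b ^ (t / 2) := by
  rw [Real.mul_rpow (by positivity) (by positivity), ← Real.rpow_mul ha.le,
    ← Real.rpow_mul hb.le, ← mul_assoc, ← Real.rpow_add ha]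
  ring_nf

lemma pow_comb₂ {a b : ℝ} (ha : 0 < a) (hb : 0 < b) (t : ℝ) :
    (a ^ ((1 : ℝ) / 2) * b ^ ((1 : ℝ) / 2)) ^ (1 - t) * b ^ t
      = a ^ ((1 - t) / 2) * b ^ ((1 + t) / 2) := by
  rw [Real.mul_rpow (by positivity) (by positivity), ← Real.rpow_mul ha.le,
    ← Real.rpow_mul hb.le, mul_assoc, ← Real.rpow_add hb]
  ring_nf

lemma term_zero {a b ν : ℝ} (h0 : 0 ≤ ν) (h1 : ν < 1) :
    term a b ν 0 = min ν (1 - ν) * (a ^ ((1 : ℝ) / 2) - b ^ ((1 : ℝ) / 2)) ^ 2 := by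
  have hm0 : m ν 0 = 0 := by
    unfold m
    rw [pow_zero, one_mul, Int.floor_eq_zero_iff.2 ⟨h0, h1⟩, Int.cast_zero]
  unfold term
  rw [hm0]
  norm_num [r, Real.rpow_one, Real.rpow_zero]

lemma step (a b ν : ℝ) (ha : 0 < a) (hb : 0 < b) (h0 : 0 ≤ ν) (h1 : ν < 1) :
    ∃ a' b' ν' : ℝ, 0 < a' ∧ 0 < b' ∧ 0 ≤ ν' ∧ ν' < 1 ∧
      (1 - ν) * a + ν * b = (1 - ν') * a' + ν' * b' + term a b ν 0 ∧
      a ^ (1 - ν) * b ^ ν = a' ^ (1 - ν') * b' ^ ν' ∧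
      ∀ k : ℕ, term a' b' ν' k = term a b ν (k + 1) := by
  have hsa : a ^ ((1 : ℝ) / 2) * a ^ ((1 : ℝ) / 2) = a := by
    rw [← Real.rpow_add ha]; norm_num
  have hsb : b ^ ((1 : ℝ) / 2) * b ^ ((1 : ℝ) / 2) = b := by
    rw [← Real.rpow_add hb]; norm_num
  rcases lt_or_ge ν (1 / 2) with hlt | hge
  · -- m₁ = 0 : interval [0, 1/2]
    refine ⟨a, a ^ ((1 : ℝ) / 2) * b ^ ((1 : ℝ) / 2), 2 * ν, ha, by positivity,
      by linarith, by linarith, ?_, ?_, ?_⟩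
    · rw [term_zero h0 h1, min_eq_left (by linarith)]
      linear_combination (-ν) * hsa + (-ν) * hsb
    · rw [pow_comb₁ ha hb (2 * ν)]
      ring_nf
    · intro k
      have hm : m (2 * ν) k = m ν (k + 1) := by
        unfold m
        rw [show (2 : ℝ) ^ k * (2 * ν) = 2 ^ (k + 1) * ν by ring]
      have hr : ∀ j, r (2 * ν) j = r ν (j + 1) := by
        refine r_shift ?_
        have hr0 : r ν 0 = ν := min_eq_left (by linarith)
        rw [r_succ, hr0]
      unfold term
      rw [hr k, hm, pow_comb₁ ha hb, pow_comb₁ ha hb,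
        show m ν (k + 1) / 2 ^ k / 2 = m ν (k + 1) / 2 ^ (k + 1) by ring,
        show (m ν (k + 1) + 1) / 2 ^ k / 2 = (m ν (k + 1) + 1) / 2 ^ (k + 1) by ring]
  · -- m₁ = 1 : interval [1/2, 1]
    refine ⟨a ^ ((1 : ℝ) / 2) * b ^ ((1 : ℝ) / 2), b, 2 * ν - 1, by positivity, hb,
      by linarith, by linarith, ?_, ?_, ?_⟩
    · rw [term_zero h0 h1, min_eq_right (by linarith)]
      linear_combination (ν - 1) * hsa + (ν - 1) * hsb
    · rw [pow_comb₂ ha hb (2 * ν - 1)]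
      ring_nf
    · intro k
      have h2k : (2 : ℝ) ^ k ≠ 0 := by positivity
      have hm : m (2 * ν - 1) k = m ν (k + 1) - 2 ^ k := by
        unfold m
        rw [show (2 : ℝ) ^ k * (2 * ν - 1) = 2 ^ (k + 1) * ν - ((2 ^ k : ℤ) : ℝ) by
          push_cast; ring, Int.floor_sub_intCast]
        push_cast; ring
      have hr : ∀ j, r (2 * ν - 1) j = r ν (j + 1) := by
        refine r_shift ?_
        have hr0 : r ν 0 = 1 - ν := min_eq_right (by linarith)
        rw [r_succ, hr0, min_comm]
        ring_nf
      unfold term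
      rw [hr k, hm, pow_comb₂ ha hb, pow_comb₂ ha hb,
        show (1 - (m ν (k + 1) - 2 ^ k) / 2 ^ k) / 2 = 1 - m ν (k + 1) / 2 ^ (k + 1) by
          field_simp; all_goals first | ring1 | exact Or.inl (by ring1) | exact Or.inl trivial,
        show (1 + (m ν (k + 1) - 2 ^ k) / 2 ^ k) / 2 = m ν (k + 1) / 2 ^ (k + 1) by
          field_simp; all_goals first | ring1 | exact Or.inl (by ring1) | exact Or.inl trivial,
        show (1 - (m ν (k + 1) - 2 ^ k + 1) / 2 ^ k) / 2
            = 1 - (m ν (k + 1) + 1) / 2 ^ (k + 1) by field_simp; all_goals first | ring1 | exact Or.inl (by ring1) | exact Or.inl trivial,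
        show (1 + (m ν (k + 1) - 2 ^ k + 1) / 2 ^ k) / 2
            = (m ν (k + 1) + 1) / 2 ^ (k + 1) by field_simp; all_goals first | ring1 | exact Or.inl (by ring1) | exact Or.inl trivial]

lemma key : ∀ n : ℕ, ∀ ν : ℝ, 0 ≤ ν → ν < 1 → ∀ a b : ℝ, 0 < a → 0 < b →
    a ^ (1 - ν) * b ^ ν + ∑ k ∈ Finset.range (n + 1), term a b ν k
      ≤ (1 - ν) * a + ν * b := by
  intro n
  induction n with
  | zero =>
    intro ν h0 h1 a b ha hb
    obtain ⟨a', b', ν', ha', hb', h0', h1', hlin, hgeo, -⟩ := step a b ν ha hb h0 h1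
    rw [Finset.sum_range_one, hlin, hgeo]
    have := Real.geom_mean_le_arith_mean2_weighted (by linarith : (0:ℝ) ≤ 1 - ν') h0'
      ha'.le hb'.le (by ring)
    linarith
  | succ n ih =>
    intro ν h0 h1 a b ha hb
    obtain ⟨a', b', ν', ha', hb', h0', h1', hlin, hgeo, hterm⟩ := step a b ν ha hb h0 h1
    have ih' := ih ν' h0' h1' a' b' ha' hb'
    rw [hlin, hgeo, Finset.sum_range_succ' _ (n + 1)]
    simp only [← hterm]
    have hm0 : m ν 0 = 0 := by
      unfold m
      rw [pow_zero, one_mul, Int.floor_eq_zero_iff.2 ⟨h0, h1⟩, Int.cast_zero]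
    linarith

theorem stmt0 (a b ν : ℝ) (ha : 0 < a) (hb : 0 < b) (hν : ν ∈ Set.Ioo (0 : ℝ) 1) (n : ℕ) :
    (1 - ν) * a + ν * b ≥ a ^ (1 - ν) * b ^ ν +
      ∑ k ∈ Finset.range (n + 1), r ν k *
        ((a ^ (1 - m ν k / 2 ^ k) * b ^ (m ν k / 2 ^ k)) ^ ((1 : ℝ) / 2) -
          (a ^ (1 - (m ν k + 1) / 2 ^ k) * b ^ ((m ν k + 1) / 2 ^ k)) ^ ((1 : ℝ) / 2)) ^ 2 := by
  have := key n ν hν.1.le hν.2 a b ha hb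
  simp only [term] at this
  exact this
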